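/- The map (T1,T2) ↦ P_{[T1,T2]} is a bijection from the set of pairs of binary trees of size n with T1 ≤ T2 in the Tamari order onto the set of interval-posets of size n. Moreover, for every such pair, the linear extensions of P_{[T1,T2]} are exactly the permutations lying in the sylvester class of some binary tree T' with T1 ≤ T' ≤ T2. -/

import Mathlib

/-- Planar binary trees: empty, or a node with a left and a right subtree. -/
inductive BinTree : Type where
  | leaf : BinTree
  | node : BinTree → BinTree → BinTree
  deriving DecidableEq

namespace BinTree

/-- Size: number of internal nodes. -/
def size : BinTree → ℕ
  | leaf => 0
  | node l r => l.size + r.size + 1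

/-- `sub T o a b` : in the binary-search-tree labelling of `T` shifted by `o`
(its labels are `o+1, …, o+T.size`), the node labelled `a` lies in the subtree
rooted at the node labelled `b`, i.e. `a ⊴_T b`. -/
def sub : BinTree → ℕ → ℕ → ℕ → Prop
  | leaf, _, _, _ => False
  | node l r, o, a, b =>
      (b = o + l.size + 1 ∧ o + 1 ≤ a ∧ a ≤ o + l.size + r.size + 1) ∨
      l.sub o a b ∨ r.sub (o + l.size + 1) a b

/-- One right rotation, applied at any position of the tree. -/
inductive Rot : BinTree → BinTree → Prop
  | base (A B C : BinTree) : Rot (node (node A B) C) (node A (node B C))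
  | left {l l' : BinTree} (r : BinTree) : Rot l l' → Rot (node l r) (node l' r)
  | right (l : BinTree) {r r' : BinTree} : Rot r r' → Rot (node l r) (node l r')

end BinTree

/-- Tamari order: reflexive-transitive closure of right rotation. -/
def tamariLE : BinTree → BinTree → Prop := Relation.ReflTransGen BinTree.Rot

/-- `incRel T a c` : `a` is below `c` in the initial forest `inc T`. -/
def incRel (T : BinTree) (a c : ℕ) : Prop := a < c ∧ T.sub 0 a c

/-- `decRel T c a` : `c` is below `a` in the final forest `dec T`. -/
def decRel (T : BinTree) (c a : ℕ) : Prop := a < c ∧ T.sub 0 c a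

/-- An interval-poset: a partial order on `{1, …, n}` in which, whenever
`a ⊴ c` and `a < c`, all `a < b < c` satisfy `b ⊴ c`, and whenever `c ⊴ a` and
`a < c`, all `a < b < c` satisfy `b ⊴ a`.  `rel x y` means "`x` is below `y`". -/
structure IntervalPoset : Type where
  n : ℕ
  rel : ℕ → ℕ → Prop
  supp : ∀ a b, rel a b → 1 ≤ a ∧ a ≤ n ∧ 1 ≤ b ∧ b ≤ n
  refl : ∀ a, 1 ≤ a → a ≤ n → rel a a
  antisymm : ∀ a b, rel a b → rel b a → a = b
  trans : ∀ a b c, rel a b → rel b c → rel a c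
  incCond : ∀ a b c, rel a c → a < b → b < c → rel b c
  decCond : ∀ a b c, rel c a → a < b → b < c → rel b a

/-- The partial order on `{1, …, n}` generated by a family `r` of relations. -/
def genClos (n : ℕ) (r : ℕ → ℕ → Prop) : ℕ → ℕ → Prop :=
  fun a b => (a = b ∧ 1 ≤ a ∧ a ≤ n) ∨ Relation.TransGen r a b

/-- The relation of the interval-poset `P_{[T1,T2]}` of a Tamari interval: the
partial order on `{1, …, n}` generated by the relations of `dec T1` together
with those of `inc T2`. -/
def pairRel (n : ℕ) (T1 T2 : BinTree) : ℕ → ℕ → Prop :=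
  genClos n (fun x y => decRel T1 x y ∨ incRel T2 x y)

/-- `IsLinExt n r l` : the list `l` is a linear extension of the (strict or
reflexive) relation `r` ("`x` below `y`") on `{1, …, n}` : it lists `1, …, n`
once each, and `a` appears before `b` whenever `a` is below `b` with `a ≠ b`. -/
def IsLinExt (n : ℕ) (r : ℕ → ℕ → Prop) (l : List ℕ) : Prop :=
  l.Nodup ∧ (∀ x, x ∈ l ↔ 1 ≤ x ∧ x ≤ n) ∧
    ∀ a b, r a b → a ≠ b → l.idxOf a < l.idxOf b

namespace BinTree

theorem sub_bounds : ∀ (T : BinTree) (o a b : ℕ), sub T o a b →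
    o < a ∧ a ≤ o + T.size ∧ o < b ∧ b ≤ o + T.size := by
  intro T
  induction T with
  | leaf => intro o a b h; exact h.elim
  | node l r ihl ihr =>
    intro o a b h
    rcases h with ⟨hb, ha1, ha2⟩ | h | h
    · simp [size] at *; omega
    · have := ihl o a b h; simp [size] at *; omega
    · have := ihr (o + l.size + 1) a b h; simp [size] at *; omega

theorem sub_self : ∀ (T : BinTree) (o a : ℕ), o < a → a ≤ o + T.size → sub T o a a := by
  intro T
  induction T with
  | leaf => intro o a h1 h2; simp [size] at h2; omega
  | node l r ihl ihr =>
    intro o a h1 h2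
    simp [size] at h2
    rcases lt_trichotomy a (o + l.size + 1) with h | h | h
    · exact Or.inr (Or.inl (ihl o a h1 (by omega)))
    · exact Or.inl ⟨h, by omega, by omega⟩
    · exact Or.inr (Or.inr (ihr (o + l.size + 1) a h (by omega)))

theorem sub_root : ∀ (T : BinTree) (o a : ℕ), o < a → a ≤ o + T.size →
    ∃ ρ, o < ρ ∧ ρ ≤ o + T.size ∧ (∀ x, o < x → x ≤ o + T.size → sub T o x ρ) := by
  intro T
  induction T with
  | leaf => intro o a h1 h2; simp [size] at h2; omega
  | node l r _ _ =>
    intro o a _ _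
    refine ⟨o + l.size + 1, by omega, by simp [size] <;> omega, ?_⟩
    intro x hx1 hx2
    simp [size] at hx2
    exact Or.inl ⟨rfl, hx1, by omega⟩

theorem sub_trans : ∀ (T : BinTree) (o a b c : ℕ),
    sub T o a b → sub T o b c → sub T o a c := by
  intro T
  induction T with
  | leaf => intro o a b c h; exact h.elim
  | node l r ihl ihr =>
    intro o a b c h1 h2
    rcases h2 with ⟨hc, hb1, hb2⟩ | h2 | h2
    · have := sub_bounds _ _ _ _ h1
      exact Or.inl ⟨hc, by omega, by simp [size] at this ⊢; omega⟩
    · -- c in left subtree, so b in left subtree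
      have hb := sub_bounds _ _ _ _ h2
      -- b ≤ o + l.size, so h1 must be a left-subtree statement
      rcases h1 with ⟨hb', _, _⟩ | h1 | h1
      · omega
      · exact Or.inr (Or.inl (ihl o a b c h1 h2))
      · have := sub_bounds _ _ _ _ h1; omega
    · have hb := sub_bounds _ _ _ _ h2
      rcases h1 with ⟨hb', _, _⟩ | h1 | h1
      · omega
      · have := sub_bounds _ _ _ _ h1; omega
      · exact Or.inr (Or.inr (ihr _ a b c h1 h2))

theorem sub_antisymm : ∀ (T : BinTree) (o a b : ℕ),
    sub T o a b → sub T o b a → a = b := by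
  intro T
  induction T with
  | leaf => intro o a b h; exact h.elim
  | node l r ihl ihr =>
    intro o a b h1 h2
    rcases h1 with ⟨hb, _, _⟩ | h1 | h1
    · -- b is root; h2 : sub T o b a with b the root
      rcases h2 with ⟨ha, _, _⟩ | h2 | h2
      · omega
      · have := sub_bounds _ _ _ _ h2; omega
      · have := sub_bounds _ _ _ _ h2; omega
    · have hb := sub_bounds _ _ _ _ h1
      rcases h2 with ⟨ha, _, _⟩ | h2 | h2
      · omega
      · exact ihl o a b h1 h2
      · have := sub_bounds _ _ _ _ h2; omega
    · have hb := sub_bounds _ _ _ _ h1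
      rcases h2 with ⟨ha, _, _⟩ | h2 | h2
      · omega
      · have := sub_bounds _ _ _ _ h2; omega
      · exact ihr _ a b h1 h2

theorem sub_interval : ∀ (T : BinTree) (o a b x : ℕ),
    sub T o a b → ((a ≤ x ∧ x ≤ b) ∨ (b ≤ x ∧ x ≤ a)) → sub T o x b := by
  intro T
  induction T with
  | leaf => intro o a b x h; exact h.elim
  | node l r ihl ihr =>
    intro o a b x h1 hx
    rcases h1 with ⟨hb, ha1, ha2⟩ | h1 | h1
    · exact Or.inl ⟨hb, by omega, by omega⟩
    · have := sub_bounds _ _ _ _ h1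
      exact Or.inr (Or.inl (ihl o a b x h1 hx))
    · have := sub_bounds _ _ _ _ h1
      exact Or.inr (Or.inr (ihr _ a b x h1 hx))

theorem sub_shift : ∀ (T : BinTree) (o d a b : ℕ),
    sub T o a b ↔ sub T (o + d) (a + d) (b + d) := by
  intro T
  induction T with
  | leaf => intro o d a b; simp [sub]
  | node l r ihl ihr =>
    intro o d a b
    show _ ↔ (b + d = o + d + l.size + 1 ∧ _ ∧ _) ∨ _ ∨ _
    rw [show o + d + l.size + 1 = (o + l.size + 1) + d by ring]
    constructor
    · rintro (⟨h1, h2, h3⟩ | h | h)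
      · exact Or.inl ⟨by omega, by omega, by omega⟩
      · exact Or.inr (Or.inl ((ihl o d a b).1 h))
      · exact Or.inr (Or.inr ((ihr (o + l.size + 1) d a b).1 h))
    · rintro (⟨h1, h2, h3⟩ | h | h)
      · exact Or.inl ⟨by omega, by omega, by omega⟩
      · exact Or.inr (Or.inl ((ihl o d a b).2 h))
      · exact Or.inr (Or.inr ((ihr (o + l.size + 1) d a b).2 h))

theorem Rot_size : ∀ {S T : BinTree}, Rot S T → S.size = T.size := by
  intro S T h
  induction h with
  | base A B C => simp [size]; ring
  | left r _ ih => simp [size, ih]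
  | right l _ ih => simp [size, ih]

end BinTree

theorem tamariLE_size {S T : BinTree} (h : tamariLE S T) : S.size = T.size := by
  induction h with
  | refl => rfl
  | tail _ h2 ih => exact ih.trans (BinTree.Rot_size h2)

theorem tamariLE_node_left {l l' : BinTree} (r : BinTree) (h : tamariLE l l') :
    tamariLE (BinTree.node l r) (BinTree.node l' r) := by
  induction h with
  | refl => exact Relation.ReflTransGen.refl
  | tail _ h2 ih => exact ih.tail (BinTree.Rot.left r h2)

theorem tamariLE_node_right (l : BinTree) {r r' : BinTree} (h : tamariLE r r') :
    tamariLE (BinTree.node l r) (BinTree.node l r') := by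
  induction h with
  | refl => exact Relation.ReflTransGen.refl
  | tail _ h2 ih => exact ih.tail (BinTree.Rot.right l h2)
namespace BinTree

/-- The largest label of the subtree rooted at label `b`. -/
def hi : BinTree → ℕ → ℕ → ℕ
  | leaf, _, _ => 0
  | node l r, o, b =>
    if b ≤ o + l.size then hi l o b
    else if b = o + l.size + 1 then o + l.size + r.size + 1
    else hi r (o + l.size + 1) b

theorem le_hi : ∀ (T : BinTree) (o b : ℕ), o < b → b ≤ o + T.size →
    b ≤ hi T o b ∧ hi T o b ≤ o + T.size := by
  intro T
  induction T with
  | leaf => intro o b h1 h2; simp [size] at h2; omega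
  | node l r ihl ihr =>
    intro o b h1 h2
    simp only [size] at h2
    rw [hi]
    split
    · rename_i h
      have := ihl o b h1 h
      simp [size]; omega
    · split
      · simp [size]; omega
      · rename_i h h'
        have := ihr (o + l.size + 1) b (by omega) (by omega)
        simp [size]; omega

theorem sub_hi : ∀ (T : BinTree) (o b : ℕ), o < b → b ≤ o + T.size →
    sub T o (hi T o b) b := by
  intro T
  induction T with
  | leaf => intro o b h1 h2; simp [size] at h2; omega
  | node l r ihl ihr =>
    intro o b h1 h2
    simp only [size] at h2
    rw [hi]
    split
    · exact Or.inr (Or.inl (ihl o b h1 (by assumption)))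
    · split
      · rename_i h h'
        exact Or.inl ⟨h', by omega, by omega⟩
      · rename_i h h'
        exact Or.inr (Or.inr (ihr (o + l.size + 1) b (by omega) (by omega)))

theorem sub_le_hi : ∀ (T : BinTree) (o x b : ℕ), sub T o x b → x ≤ hi T o b := by
  intro T
  induction T with
  | leaf => intro o x b h; exact h.elim
  | node l r ihl ihr =>
    intro o x b h
    rw [hi]
    rcases h with ⟨hb, hx1, hx2⟩ | h | h
    · have : ¬ b ≤ o + l.size := by omega
      simp [this, hb]; omega
    · have hb := sub_bounds _ _ _ _ h
      have : b ≤ o + l.size := by omega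
      simp [this]
      exact ihl _ _ _ h
    · have hb := sub_bounds _ _ _ _ h
      have h1 : ¬ b ≤ o + l.size := by omega
      have h2 : ¬ b = o + l.size + 1 := by omega
      simp [h1, h2]
      exact ihr _ _ _ h

/-- `dec`-relations are characterised by `hi`. -/
theorem dec_iff_hi (T : BinTree) (o a c : ℕ) (ha1 : o < a) (ha2 : a ≤ o + T.size)
    (hac : a < c) : sub T o c a ↔ c ≤ hi T o a := by
  constructor
  · exact sub_le_hi T o c a
  · intro h
    exact sub_interval T o (hi T o a) a c (sub_hi T o a ha1 ha2) (Or.inr ⟨by omega, h⟩)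

/-- nesting: if `a` is in the subtree of `b` then `hi a ≤ hi b`. -/
theorem hi_mono (T : BinTree) (o a b : ℕ) (h : sub T o a b) :
    hi T o a ≤ hi T o b := by
  have hb := sub_bounds _ _ _ _ h
  exact sub_le_hi T o _ b (sub_trans T o _ a b (sub_hi T o a hb.1 hb.2.1) h)

end BinTree
namespace BinTree

def mirror : BinTree → BinTree
  | leaf => leaf
  | node l r => node (mirror r) (mirror l)

@[simp] theorem size_mirror : ∀ T : BinTree, T.mirror.size = T.size := by
  intro T
  induction T with
  | leaf => rfl
  | node l r ihl ihr => simp [mirror, size, ihl, ihr]; ring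

@[simp] theorem mirror_mirror : ∀ T : BinTree, T.mirror.mirror = T := by
  intro T
  induction T with
  | leaf => rfl
  | node l r ihl ihr => simp [mirror, ihl, ihr]

theorem sub_mirror : ∀ (T : BinTree) (o a b : ℕ), sub T o a b →
    sub T.mirror o (2*o + T.size + 1 - a) (2*o + T.size + 1 - b) := by
  intro T
  induction T with
  | leaf => intro o a b h; exact h.elim
  | node l r ihl ihr =>
    intro o a b h
    have hb := sub_bounds _ _ _ _ h
    simp only [size] at hb ⊢
    show (_ = o + r.mirror.size + 1 ∧ _ ∧ _) ∨
      sub r.mirror o _ _ ∨ sub l.mirror (o + r.mirror.size + 1) _ _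
    rcases h with ⟨hb', ha1, ha2⟩ | h | h
    · refine Or.inl ⟨by simp [size_mirror]; omega, by omega, ?_⟩
      simp only [size_mirror]; omega
    · -- a,b in l; goes to right branch of mirror
      have hbl := sub_bounds _ _ _ _ h
      have ih := ihl o a b h
      refine Or.inr (Or.inr ?_)
      have e1 : 2*o + (l.size + r.size + 1) + 1 - a
          = (2*o + l.size + 1 - a) + (r.size + 1) := by omega
      have e2 : 2*o + (l.size + r.size + 1) + 1 - b
          = (2*o + l.size + 1 - b) + (r.size + 1) := by omega
      rw [size_mirror, e1, e2]
      rw [show o + r.size + 1 = o + (r.size + 1) by ring]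
      exact (sub_shift l.mirror o (r.size + 1) _ _).1 ih
    · have hbr := sub_bounds _ _ _ _ h
      have ih := ihr (o + l.size + 1) a b h
      refine Or.inr (Or.inl ?_)
      have e1 : 2*(o + l.size + 1) + r.size + 1 - a
          = (2*o + (l.size + r.size + 1) + 1 - a) + (l.size + 1) := by omega
      have e2 : 2*(o + l.size + 1) + r.size + 1 - b
          = (2*o + (l.size + r.size + 1) + 1 - b) + (l.size + 1) := by omega
      rw [e1, e2] at ih
      exact (sub_shift r.mirror o (l.size + 1) _ _).2 ih

theorem sub_mirror_iff (T : BinTree) (o a b : ℕ) :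
    sub T.mirror o a b ↔ sub T o (2*o + T.size + 1 - a) (2*o + T.size + 1 - b) := by
  constructor
  · intro h
    have := sub_mirror T.mirror o a b h
    rwa [mirror_mirror, size_mirror] at this
  · intro h
    have hb := sub_bounds _ _ _ _ h
    have := sub_mirror T o _ _ h
    have ea : 2*o + T.size + 1 - (2*o + T.size + 1 - a) = a := by omega
    have eb : 2*o + T.size + 1 - (2*o + T.size + 1 - b) = b := by omega
    rwa [ea, eb] at this

theorem Rot_mirror : ∀ {S T : BinTree}, Rot S T → Rot T.mirror S.mirror := by
  intro S T h
  induction h with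
  | base A B C => exact Rot.base C.mirror B.mirror A.mirror
  | left r _ ih => exact Rot.right r.mirror ih
  | right l _ ih => exact Rot.left l.mirror ih

end BinTree

theorem tamariLE_mirror {S T : BinTree} (h : tamariLE S T) :
    tamariLE T.mirror S.mirror := by
  induction h with
  | refl => exact Relation.ReflTransGen.refl
  | tail _ h2 ih => exact Relation.ReflTransGen.head (BinTree.Rot_mirror h2) ih
namespace BinTree

theorem size_eq_zero : ∀ {T : BinTree}, T.size = 0 → T = leaf := by
  intro T h
  cases T with
  | leaf => rfl
  | node l r => simp [size] at h

theorem left_size_lt {l l' r r' : BinTree} (o : ℕ)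
    (hsz : (node l r).size = (node l' r').size)
    (hd : ∀ a c, o < a → a < c → c ≤ o + (node l r).size →
      (sub (node l r) o c a ↔ sub (node l' r') o c a))
    (hlt : l.size < l'.size) : False := by
  have hS : (node l r).size = l.size + r.size + 1 := rfl
  have hT : (node l' r').size = l'.size + r'.size + 1 := rfl
  set b := o + l.size + 1 with hb
  set c := o + (node l r).size with hc
  have hsub : sub (node l r) o c b := by
    exact Or.inl ⟨rfl, by omega, by omega⟩
  have hbc : b < c := by omega
  have := (hd b c (by omega) hbc (by omega)).1 hsub
  rcases this with ⟨h1, _, _⟩ | h | h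
  · omega
  · have := sub_bounds _ _ _ _ h; omega
  · have := sub_bounds _ _ _ _ h; omega

theorem dec_inj : ∀ (S T : BinTree) (o : ℕ), S.size = T.size →
    (∀ a c, o < a → a < c → c ≤ o + S.size → (sub S o c a ↔ sub T o c a)) →
    S = T := by
  intro S
  induction S with
  | leaf =>
    intro T o hsz _
    exact (size_eq_zero (hsz.symm.trans rfl)).symm
  | node l r ihl ihr =>
    intro T o hsz hd
    cases T with
    | leaf => exact absurd hsz (by simp [size])
    | node l' r' =>
      have hll' : l.size = l'.size := by
        rcases lt_trichotomy l.size l'.size with h | h | h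
        · exact absurd (left_size_lt o hsz hd h) (fun x => x)
        · exact h
        · exact absurd (left_size_lt o hsz.symm
            (fun a c h1 h2 h3 => (hd a c h1 h2 (by simp [size] at hsz h3 ⊢; omega)).symm) h)
            (fun x => x)
      have hrr' : r.size = r'.size := by simp [size] at hsz; omega
      have hl : l = l' := by
        apply ihl l' o hll'
        intro a c h1 h2 h3
        have hc : c ≤ o + l.size := h3
        have := hd a c h1 h2 (by simp [size]; omega)
        constructor
        · intro hx
          rcases (this.1 (Or.inr (Or.inl hx))) with ⟨h', _, _⟩ | h' | h'
          · omega
          · exact h'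
          · have := sub_bounds _ _ _ _ h'; omega
        · intro hx
          rcases (this.2 (Or.inr (Or.inl hx))) with ⟨h', _, _⟩ | h' | h'
          · omega
          · exact h'
          · have := sub_bounds _ _ _ _ h'; omega
      have hr : r = r' := by
        apply ihr r' (o + l.size + 1) hrr'
        intro a c h1 h2 h3
        have key := hd a c (by omega) h2 (by simp [size]; omega)
        constructor
        · intro hx
          rcases key.1 (Or.inr (Or.inr hx)) with ⟨h', _, _⟩ | h' | h'
          · omega
          · have := sub_bounds _ _ _ _ h'; omega
          · have heq : o + l'.size + 1 = o + l.size + 1 := by omega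
            rwa [heq] at h'
        · intro hx
          have hx' : sub r' (o + l'.size + 1) c a := by
            have heq : o + l'.size + 1 = o + l.size + 1 := by omega
            rwa [heq]
          rcases key.2 (Or.inr (Or.inr hx')) with ⟨h', _, _⟩ | h' | h'
          · omega
          · have := sub_bounds _ _ _ _ h'; omega
          · exact h'
      rw [hl, hr]

end BinTree
namespace BinTree

theorem sub_off {T : BinTree} {o o' z w : ℕ} (h : sub T o z w) (e : o = o') :
    sub T o' z w := e ▸ h

theorem Rot_dec_mono : ∀ {S S' : BinTree}, Rot S S' →
    ∀ o x y, y < x → sub S o x y → sub S' o x y := by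
  intro S S' h
  induction h with
  | base A B C =>
    intro o x y hxy h
    simp only [sub, size] at h ⊢
    rcases h with ⟨hw, hz1, hz2⟩ | (⟨hw, hz1, hz2⟩ | h | h) | h
    · exact Or.inr (Or.inr (Or.inl ⟨by omega, by omega, by omega⟩))
    · exact Or.inl ⟨by omega, by omega, by omega⟩
    · exact Or.inr (Or.inl h)
    · exact Or.inr (Or.inr (Or.inr (Or.inl h)))
    · exact Or.inr (Or.inr (Or.inr (Or.inr (sub_off h (by ring)))))
  | @left l l' r hrot ih =>
    intro o x y hxy h
    have hsz : l.size = l'.size := Rot_size hrot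
    rcases h with ⟨hw, hz1, hz2⟩ | h | h
    · exact Or.inl ⟨by omega, by omega, by simp [← hsz]; omega⟩
    · exact Or.inr (Or.inl (ih o x y hxy h))
    · exact Or.inr (Or.inr (sub_off h (by omega)))
  | @right l r r' hrot ih =>
    intro o x y hxy h
    have hsz : r.size = r'.size := Rot_size hrot
    rcases h with ⟨hw, hz1, hz2⟩ | h | h
    · exact Or.inl ⟨by omega, by omega, by omega⟩
    · exact Or.inr (Or.inl h)
    · exact Or.inr (Or.inr (ih _ x y hxy h))

theorem Rot_inc_mono : ∀ {S S' : BinTree}, Rot S S' →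
    ∀ o x y, x < y → sub S' o x y → sub S o x y := by
  intro S S' h
  induction h with
  | base A B C =>
    intro o x y hxy h
    simp only [sub, size] at h ⊢
    rcases h with ⟨hw, hz1, hz2⟩ | h | (⟨hw, hz1, hz2⟩ | h | h)
    · exact Or.inr (Or.inl (Or.inl ⟨by omega, by omega, by omega⟩))
    · exact Or.inr (Or.inl (Or.inr (Or.inl h)))
    · exact Or.inl ⟨by omega, by omega, by omega⟩
    · exact Or.inr (Or.inl (Or.inr (Or.inr h)))
    · exact Or.inr (Or.inr (sub_off h (by ring)))
  | @left l l' r hrot ih =>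
    intro o x y hxy h
    have hsz : l.size = l'.size := Rot_size hrot
    rcases h with ⟨hw, hz1, hz2⟩ | h | h
    · exact Or.inl ⟨by omega, by omega, by simp [hsz]; omega⟩
    · exact Or.inr (Or.inl (ih o x y hxy h))
    · exact Or.inr (Or.inr (sub_off h (by omega)))
  | @right l r r' hrot ih =>
    intro o x y hxy h
    have hsz : r.size = r'.size := Rot_size hrot
    rcases h with ⟨hw, hz1, hz2⟩ | h | h
    · exact Or.inl ⟨by omega, by omega, by omega⟩
    · exact Or.inr (Or.inl h)
    · exact Or.inr (Or.inr (ih _ x y hxy h))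

end BinTree

theorem tamari_dec_mono {S T : BinTree} (h : tamariLE S T) :
    ∀ o x y, y < x → BinTree.sub S o x y → BinTree.sub T o x y := by
  induction h with
  | refl => exact fun _ _ _ _ hx => hx
  | tail _ h2 ih => exact fun o x y hxy hx => BinTree.Rot_dec_mono h2 o x y hxy (ih o x y hxy hx)

theorem tamari_inc_mono {S T : BinTree} (h : tamariLE S T) :
    ∀ o x y, x < y → BinTree.sub T o x y → BinTree.sub S o x y := by
  induction h with
  | refl => exact fun _ _ _ _ hx => hx
  | tail _ h2 ih => exact fun o x y hxy hx => ih o x y hxy (BinTree.Rot_inc_mono h2 o x y hxy hx)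
namespace BinTree

/-- Every node `i` whose subtree does not reach the last label is either a left
child (of `hi i + 1`) or has a proper ancestor `p < i` with the same `hi`. -/
theorem left_child_or_spine : ∀ (S : BinTree) (o i : ℕ), o < i → i ≤ o + S.size →
    hi S o i < o + S.size →
    (sub S o i (hi S o i + 1) ∧ ∀ x, o < x → x < hi S o i + 1 →
        sub S o x (hi S o i + 1) → sub S o x i)
    ∨ (∃ p, o < p ∧ p < i ∧ sub S o i p ∧ hi S o p = hi S o i) := by
  intro S
  induction S with
  | leaf => intro o i h1 h2; simp [size] at h2; omega
  | node l r ihl ihr =>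
    intro o i h1 h2 h3
    simp only [size] at h2 h3
    rcases lt_trichotomy i (o + l.size + 1) with hi' | hi' | hi'
    · -- i in left subtree
      have hil : i ≤ o + l.size := by omega
      have hhi : hi (node l r) o i = hi l o i := by rw [hi]; simp [hil]
      have hlb := le_hi l o i h1 hil
      rcases lt_or_eq_of_le hlb.2 with hlt | heq
      · -- hi l o i < o + l.size : use IH on l
        rcases ihl o i h1 hil hlt with ⟨hs, hx⟩ | ⟨p, hp1, hp2, hp3, hp4⟩
        · left
          rw [hhi]
          refine ⟨Or.inr (Or.inl hs), ?_⟩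
          intro x hx1 hx2 hsx
          rcases hsx with ⟨he, _, _⟩ | hsx | hsx
          · omega
          · exact Or.inr (Or.inl (hx x hx1 hx2 hsx))
          · have := sub_bounds _ _ _ _ hsx; omega
        · right
          refine ⟨p, hp1, hp2, Or.inr (Or.inl hp3), ?_⟩
          rw [hhi]
          have hpl : p ≤ o + l.size := by omega
          rw [hi]; simp [hpl, hp4]
      · -- hi l o i = o + l.size : j is the root
        rw [hhi, heq]
        by_cases hcov : ∀ x, o < x → x ≤ o + l.size → sub l o x i
        · left
          constructor
          · exact Or.inl ⟨rfl, by omega, by omega⟩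
          · intro x hx1 hx2 _
            exact Or.inr (Or.inl (hcov x hx1 (by omega)))
        · push_neg at hcov
          obtain ⟨x₀, hx₀1, hx₀2, hx₀3⟩ := hcov
          -- l must be a node, and i is in its right subtree
          cases l with
          | leaf => simp [size] at hil; omega
          | node A B =>
            right
            have hρ : o + A.size + 1 < i := by
              rcases lt_trichotomy i (o + A.size + 1) with h' | h' | h'
              · -- i in A : hi too small
                exfalso
                have : hi (node A B) o i = hi A o i := by
                  rw [hi]; simp [show i ≤ o + A.size by omega]
                have hA := le_hi A o i h1 (by omega)
                simp only [size] at heq hil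
                omega
              · -- i is the root of l : covers everything
                exfalso
                exact hx₀3 (Or.inl ⟨h'.symm ▸ rfl, by omega, by simp [size] at hil hx₀2; omega⟩)
              · exact h'
            refine ⟨o + A.size + 1, by omega, hρ, Or.inr (Or.inl (Or.inl ⟨rfl, by omega, by simp [size] at hil; omega⟩)), ?_⟩
            have h1' : hi (node (node A B) r) o (o + A.size + 1) = hi (node A B) o (o + A.size + 1) := by
              rw [hi]; simp [show o + A.size + 1 ≤ o + (node A B).size by simp [size] <;> omega]
            rw [h1']
            rw [hi]; simp [show ¬ (o + A.size + 1 ≤ o + A.size) by omega]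
            simp [size]; omega
    · -- i is the root : hi = o + size, contradiction
      exfalso
      have : hi (node l r) o i = o + l.size + r.size + 1 := by
        rw [hi]; simp [show ¬ i ≤ o + l.size by omega, hi']
      omega
    · -- i in right subtree
      set ρ := o + l.size + 1 with hρ
      have hhi : hi (node l r) o i = hi r ρ i := by
        rw [hi]; simp [show ¬ i ≤ o + l.size by omega, show ¬ i = o + l.size + 1 by omega]; rfl
      rcases ihr ρ i hi' (by omega) (by rw [← hhi]; omega) with ⟨hs, hx⟩ | ⟨p, hp1, hp2, hp3, hp4⟩
      · left
        rw [hhi]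
        refine ⟨Or.inr (Or.inr hs), ?_⟩
        intro x hx1 hx2 hsx
        have hjb := sub_bounds _ _ _ _ hs
        rcases hsx with ⟨he, _, _⟩ | hsx | hsx
        · omega
        · have := sub_bounds _ _ _ _ hsx; omega
        · exact Or.inr (Or.inr (hx x (by have := sub_bounds _ _ _ _ hsx; omega) hx2 hsx))
      · right
        refine ⟨p, by omega, hp2, Or.inr (Or.inr hp3), ?_⟩
        rw [hhi, ← hp4]
        rw [hi]; simp [show ¬ p ≤ o + l.size by omega, show ¬ p = o + l.size + 1 by omega]; rfl

end BinTree
namespace BinTree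

/-- If `i` is the root of the (nonempty) left subtree of `j`, one can rotate at
`j`, and the effect on the `hi` vector is: `hi i` becomes `hi j`, rest unchanged. -/
theorem rot_at : ∀ (S : BinTree) (o i j : ℕ), o < i → i < j → j ≤ o + S.size →
    sub S o i j → (∀ x, o < x → x < j → sub S o x j → sub S o x i) →
    ∃ S', Rot S S' ∧ hi S' o i = hi S o j ∧
      (∀ y, o < y → y ≤ o + S.size → y ≠ i → hi S' o y = hi S o y) := by
  intro S
  induction S with
  | leaf => intro o i j h1 h2 h3; simp [size] at h3; omega
  | node l r ihl ihr =>
    intro o i j h1 h2 h3 hsub hcov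
    simp only [size] at h3
    set ρ := o + l.size + 1 with hρdef
    rcases lt_trichotomy j ρ with hj | hj | hj
    · -- j in left subtree
      have hsub' : sub l o i j := by
        rcases hsub with ⟨he, _, _⟩ | h | h
        · omega
        · exact h
        · have := sub_bounds _ _ _ _ h; omega
      have hcov' : ∀ x, o < x → x < j → sub l o x j → sub l o x i := by
        intro x hx1 hx2 hx3
        have := hcov x hx1 hx2 (Or.inr (Or.inl hx3))
        rcases this with ⟨he, _, _⟩ | h | h
        · omega
        · exact h
        · have := sub_bounds _ _ _ _ h; omega
      obtain ⟨l', hrot, he1, he2⟩ := ihl o i j h1 h2 (by omega) hsub' hcov'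
      have hsz : l.size = l'.size := Rot_size hrot
      have hjl : j ≤ o + l.size := by omega
      have hbl := sub_bounds _ _ _ _ hsub'
      refine ⟨node l' r, Rot.left r hrot, ?_, ?_⟩
      · rw [hi, hi]
        simp [show i ≤ o + l'.size by omega, show j ≤ o + l.size by omega]
        exact he1
      · intro y hy1 hy2 hy3
        rw [hi, hi, ← hsz]
        rcases lt_trichotomy y ρ with hy | hy | hy
        · simp [show y ≤ o + l.size by omega]
          exact he2 y hy1 (by omega) hy3
        · simp [show ¬ y ≤ o + l.size by omega, show y = o + l.size + 1 by omega]
        · simp [show ¬ y ≤ o + l.size by omega, show ¬ y = o + l.size + 1 by omega]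
    · -- j is the root: i must be the root of l, and l is a node
      subst hj
      have hil : o < i ∧ i ≤ o + l.size := by
        rcases hsub with ⟨he, _, _⟩ | h | h
        · omega
        · have := sub_bounds _ _ _ _ h; omega
        · have := sub_bounds _ _ _ _ h; omega
      cases l with
      | leaf => simp [size] at hil; omega
      | node A B =>
        have hAB : (node A B).size = A.size + B.size + 1 := rfl
        have hBr : (node B r).size = B.size + r.size + 1 := rfl
        have hcov2 : ∀ x, o < x → x ≤ o + (node A B).size → sub (node A B) o x i := by
          intro x hx1 hx2
          have := hcov x hx1 (by omega) (Or.inl ⟨rfl, by omega, by omega⟩)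
          rcases this with ⟨he, _, _⟩ | h | h
          · omega
          · exact h
          · have := sub_bounds _ _ _ _ h; omega
        have hiroot : i = o + A.size + 1 := by
          have h1' := hcov2 (o + A.size + 1) (by omega) (by omega)
          have h2' : sub (node A B) o i (o + A.size + 1) :=
            Or.inl ⟨rfl, by omega, by omega⟩
          exact (sub_antisymm (node A B) o _ _ h2' h1')
        refine ⟨node A (node B r), Rot.base A B r, ?_, ?_⟩
        · simp only [hi]
          rw [show o + A.size + 1 + B.size + 1 = o + (node A B).size + 1 by omega]
          split_ifs <;> first | rfl | omega | (exfalso; omega)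
        · intro y hy1 hy2 hy3
          have hy2' : y ≤ o + (A.size + B.size + 1 + r.size + 1) := by
            simpa [size] using hy2
          simp only [hi]
          rw [show o + A.size + 1 + B.size + 1 = o + (node A B).size + 1 by omega]
          split_ifs <;> first | rfl | omega | (exfalso; omega)
    · -- j in right subtree
      have hsub' : sub r ρ i j := by
        rcases hsub with ⟨he, _, _⟩ | h | h
        · omega
        · have := sub_bounds _ _ _ _ h; omega
        · exact h
      have hbi := sub_bounds _ _ _ _ hsub'
      have hcov' : ∀ x, ρ < x → x < j → sub r ρ x j → sub r ρ x i := by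
        intro x hx1 hx2 hx3
        have := hcov x (by omega) hx2 (Or.inr (Or.inr hx3))
        rcases this with ⟨he, _, _⟩ | h | h
        · omega
        · have := sub_bounds _ _ _ _ h; omega
        · exact h
      obtain ⟨r', hrot, he1, he2⟩ := ihr ρ i j (by omega) h2 (by omega) hsub' hcov'
      have hsz : r.size = r'.size := Rot_size hrot
      refine ⟨node l r', Rot.right l hrot, ?_, ?_⟩
      · rw [hi, hi]
        simp [show ¬ i ≤ o + l.size by omega, show ¬ j ≤ o + l.size by omega,
          show ¬ i = o + l.size + 1 by omega, show ¬ j = o + l.size + 1 by omega]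
        exact he1
      · intro y hy1 hy2 hy3
        simp only [size] at hy2
        rw [hi, hi]
        rcases lt_trichotomy y ρ with hy | hy | hy
        · simp [show y ≤ o + l.size by omega]
        · simp [show ¬ y ≤ o + l.size by omega, show y = o + l.size + 1 by omega]
          omega
        · simp [show ¬ y ≤ o + l.size by omega, show ¬ y = o + l.size + 1 by omega]
          exact he2 y hy (by omega) hy3

end BinTree
namespace BinTree

theorem L6aux : ∀ (M : ℕ) (n : ℕ) (S T : BinTree), S.size = n → T.size = n →
    (∀ a c, a < c → sub S 0 c a → sub T 0 c a) →
    (∑ a ∈ Finset.Ioc 0 n, (hi T 0 a - hi S 0 a)) ≤ M → tamariLE S T := by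
  intro M
  induction M with
  | zero =>
    intro n S T hS hT hd hsum
    -- all his are equal, so S = T
    have hle : ∀ a, 0 < a → a ≤ n → hi S 0 a ≤ hi T 0 a := by
      intro a h1 h2
      by_cases hu : hi S 0 a = a
      · have := le_hi T 0 a h1 (by omega); omega
      · have hua := le_hi S 0 a h1 (by omega)
        have : sub S 0 (hi S 0 a) a := sub_hi S 0 a h1 (by omega)
        have := hd a (hi S 0 a) (by omega) this
        exact sub_le_hi T 0 _ a this
    have heq : ∀ a ∈ Finset.Ioc 0 n, hi T 0 a - hi S 0 a = 0 := by
      intro a ha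
      by_contra hne
      have : 0 < ∑ a ∈ Finset.Ioc 0 n, (hi T 0 a - hi S 0 a) :=
        Finset.sum_pos' (fun _ _ => Nat.zero_le _) ⟨a, ha, by omega⟩
      omega
    have hST : S = T := by
      apply dec_inj S T 0 (hS.trans hT.symm)
      intro a c h1 h2 h3
      have ha : a ∈ Finset.Ioc 0 n := Finset.mem_Ioc.2 ⟨h1, by omega⟩
      have h4 := heq a ha
      have h5 := hle a h1 (by simp at ha; omega)
      rw [dec_iff_hi S 0 a c h1 (by omega) h2, dec_iff_hi T 0 a c h1 (by omega) h2]
      omega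
    rw [hST]
    exact Relation.ReflTransGen.refl
  | succ M ih =>
    intro n S T hS hT hd hsum
    by_cases hM : (∑ a ∈ Finset.Ioc 0 n, (hi T 0 a - hi S 0 a)) ≤ M
    · exact ih n S T hS hT hd hM
    · have hle : ∀ a, 0 < a → a ≤ n → hi S 0 a ≤ hi T 0 a := by
        intro a h1 h2
        by_cases hu : hi S 0 a = a
        · have := le_hi T 0 a h1 (by omega); omega
        · have hua := le_hi S 0 a h1 (by omega)
          have : sub S 0 (hi S 0 a) a := sub_hi S 0 a h1 (by omega)
          have := hd a (hi S 0 a) (by omega) this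
          exact sub_le_hi T 0 _ a this
      -- choose i
      set A := (Finset.Ioc 0 n).filter (fun a => hi S 0 a < hi T 0 a) with hAdef
      have hA : A.Nonempty := by
        by_contra hA
        rw [Finset.not_nonempty_iff_eq_empty] at hA
        have : (∑ a ∈ Finset.Ioc 0 n, (hi T 0 a - hi S 0 a)) = 0 := by
          apply Finset.sum_eq_zero
          intro a ha
          by_contra hne
          have : a ∈ A := by
            rw [hAdef, Finset.mem_filter]
            have := hle a (Finset.mem_Ioc.1 ha).1 (Finset.mem_Ioc.1 ha).2
            exact ⟨ha, by omega⟩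
          rw [hA] at this
          exact absurd this (Finset.notMem_empty a)
        omega
      have hKne : (A.image (hi S 0)).Nonempty := hA.image _
      set m := (A.image (hi S 0)).max' hKne with hmdef
      set B := A.filter (fun a => hi S 0 a = m) with hBdef
      have hB : B.Nonempty := by
        obtain ⟨a, ha, hma⟩ := Finset.mem_image.1 ((A.image (hi S 0)).max'_mem hKne)
        exact ⟨a, Finset.mem_filter.2 ⟨ha, hma⟩⟩
      set i := B.min' hB with hidef
      have hiB : i ∈ B := B.min'_mem hB
      have hiA : i ∈ A := (Finset.mem_filter.1 hiB).1
      have him : hi S 0 i = m := (Finset.mem_filter.1 hiB).2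
      have hiIoc := Finset.mem_Ioc.1 (Finset.mem_filter.1 hiA).1
      have hiuw : hi S 0 i < hi T 0 i := (Finset.mem_filter.1 hiA).2
      have hmmax : ∀ p ∈ A, hi S 0 p ≤ m :=
        fun p hp => (A.image (hi S 0)).le_max' _ (Finset.mem_image_of_mem _ hp)
      have himin : ∀ p ∈ A, hi S 0 p = m → i ≤ p :=
        fun p hp hpm => B.min'_le p (Finset.mem_filter.2 ⟨hp, hpm⟩)
      have hwi : hi T 0 i ≤ n := by
        have := le_hi T 0 i hiIoc.1 (by omega)
        omega
      have hui : i ≤ hi S 0 i := (le_hi S 0 i hiIoc.1 (by omega)).1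
      -- i must be a left child
      have hLC := left_child_or_spine S 0 i hiIoc.1 (by omega) (by omega)
      rcases hLC with ⟨hsubij, hcov⟩ | ⟨p, hp1, hp2, hp3, hp4⟩
      · -- rotate at i
        obtain ⟨S', hrot, he1, he2⟩ := rot_at S 0 i (hi S 0 i + 1) hiIoc.1 (by omega)
          (by omega) hsubij hcov
        have hS' : S'.size = n := by rw [← Rot_size hrot]; exact hS
        set j := hi S 0 i + 1 with hjdef
        have hjIoc : 0 < j ∧ j ≤ n := by omega
        -- hi S 0 j ≤ hi T 0 i
        have hsubTji : sub T 0 j i := by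
          rw [dec_iff_hi T 0 i j hiIoc.1 (by omega) (by omega)]
          omega
        have hwj : hi T 0 j ≤ hi T 0 i := hi_mono T 0 j i hsubTji
        have huj : hi S 0 j ≤ hi T 0 i := le_trans (hle j hjIoc.1 hjIoc.2) hwj
        have hujlb := le_hi S 0 j hjIoc.1 (by omega)
        -- new dec containment
        have hd' : ∀ a c, a < c → sub S' 0 c a → sub T 0 c a := by
          intro a c hac hsub
          have hb := sub_bounds _ _ _ _ hsub
          have hc := sub_le_hi S' 0 c a hsub
          by_cases hai : a = i
          · subst hai
            rw [he1] at hc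
            rw [dec_iff_hi T 0 i c hiIoc.1 (by omega) hac]
            omega
          · rw [he2 a hb.2.2.1 (by omega) hai] at hc
            rw [dec_iff_hi T 0 a c hb.2.2.1 (by omega) hac]
            have := hle a hb.2.2.1 (by omega)
            omega
        -- measure decreases
        have hsum' : (∑ a ∈ Finset.Ioc 0 n, (hi T 0 a - hi S' 0 a)) ≤ M := by
          have hlt : (∑ a ∈ Finset.Ioc 0 n, (hi T 0 a - hi S' 0 a))
              < (∑ a ∈ Finset.Ioc 0 n, (hi T 0 a - hi S 0 a)) := by
            apply Finset.sum_lt_sum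
            · intro a ha
              rcases Finset.mem_Ioc.1 ha with ⟨ha1, ha2⟩
              by_cases hai : a = i
              · subst hai; rw [he1]; omega
              · rw [he2 a ha1 (by omega) hai]
            · refine ⟨i, Finset.mem_Ioc.2 ⟨hiIoc.1, hiIoc.2⟩, ?_⟩
              rw [he1]
              omega
          omega
        exact Relation.ReflTransGen.head hrot (ih n S' T hS' hT hd' hsum')
      · -- spine case: contradiction with minimality of i
        exfalso
        have hpIoc : 0 < p ∧ p ≤ n := ⟨hp1, by omega⟩
        have hupwp : hi S 0 p < hi T 0 p := by
          rcases lt_or_eq_of_le (hle p hpIoc.1 hpIoc.2) with h | h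
          · exact h
          · exfalso
            -- w p = u p = u i ≥ i > p, so sub T 0 i p, so w i ≤ w p = u i < w i
            have hwp : hi T 0 p = hi S 0 i := by omega
            have hsubTip : sub T 0 i p := by
              rw [dec_iff_hi T 0 p i hp1 (by omega) hp2]
              omega
            have := hi_mono T 0 i p hsubTip
            omega
        have hpA : p ∈ A := Finset.mem_filter.2 ⟨Finset.mem_Ioc.2 ⟨hp1, by omega⟩, hupwp⟩
        have := himin p hpA (by omega)
        omega

theorem L6 (S T : BinTree) (n : ℕ) (hS : S.size = n) (hT : T.size = n)
    (hd : ∀ a c, a < c → sub S 0 c a → sub T 0 c a) : tamariLE S T :=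
  L6aux (∑ a ∈ Finset.Ioc 0 n, (hi T 0 a - hi S 0 a)) n S T hS hT hd le_rfl

/-- the `inc` version, by mirror symmetry -/
theorem L6inc (S T : BinTree) (n : ℕ) (hS : S.size = n) (hT : T.size = n)
    (hinc : ∀ a c, a < c → sub T 0 a c → sub S 0 a c) : tamariLE S T := by
  have h := L6 T.mirror S.mirror n (by simp [hT]) (by simp [hS]) ?_
  · have := tamariLE_mirror h
    simpa using this
  · intro a c hac hsub
    rw [sub_mirror_iff] at hsub ⊢
    rw [hS]
    rw [hT] at hsub
    have hb := sub_bounds _ _ _ _ hsub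
    exact hinc _ _ (by omega) hsub

end BinTree
open Classical in
/-- root choice for the tree reconstructed from a decreasing forest on `{1,…,n}`. -/
noncomputable def tfdRoot (n : ℕ) (D : ℕ → ℕ → Prop) : ℕ :=
  if 0 < sInf {a | 0 < a ∧ a ≤ n ∧ D n a} ∧ sInf {a | 0 < a ∧ a ≤ n ∧ D n a} ≤ n
  then sInf {a | 0 < a ∧ a ≤ n ∧ D n a} else n

theorem tfdRoot_le (n : ℕ) (D : ℕ → ℕ → Prop) : tfdRoot n D ≤ n := by
  unfold tfdRoot; split <;> omega

theorem tfdRoot_pos (n : ℕ) (D : ℕ → ℕ → Prop) (hn : 0 < n) : 0 < tfdRoot n D := by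
  unfold tfdRoot; split <;> omega

theorem tfdRoot_mem (n : ℕ) (D : ℕ → ℕ → Prop)
    (hS : {a | 0 < a ∧ a ≤ n ∧ D n a}.Nonempty) :
    0 < tfdRoot n D ∧ tfdRoot n D ≤ n ∧ D n (tfdRoot n D) := by
  have h := Nat.sInf_mem hS
  unfold tfdRoot
  split
  · exact h
  · exfalso; rename_i hc; exact hc ⟨h.1, h.2.1⟩

theorem tfdRoot_min (n : ℕ) (D : ℕ → ℕ → Prop) (a : ℕ)
    (ha : 0 < a ∧ a ≤ n ∧ D n a) : tfdRoot n D ≤ a := by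
  have hm := Nat.sInf_mem (⟨a, ha⟩ : {x | 0 < x ∧ x ≤ n ∧ D n x}.Nonempty)
  have h := Nat.sInf_le (s := {a | 0 < a ∧ a ≤ n ∧ D n a}) ha
  unfold tfdRoot
  split
  · omega
  · exfalso; rename_i hc; exact hc ⟨hm.1, hm.2.1⟩

theorem tfdRoot_empty (n : ℕ) (D : ℕ → ℕ → Prop)
    (hS : ¬ {a | 0 < a ∧ a ≤ n ∧ D n a}.Nonempty) : tfdRoot n D = n := by
  rw [Set.not_nonempty_iff_eq_empty] at hS
  unfold tfdRoot
  rw [hS, Nat.sInf_empty]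
  simp

/-- The tree reconstructed from a decreasing forest relation `D` on `{1,…,n}`. -/
noncomputable def tfd : ℕ → (ℕ → ℕ → Prop) → BinTree
  | 0, _ => BinTree.leaf
  | (n+1), D =>
    BinTree.node (tfd (tfdRoot (n+1) D - 1) D)
      (tfd (n + 1 - tfdRoot (n+1) D)
        (fun c a => D (c + tfdRoot (n+1) D) (a + tfdRoot (n+1) D)))
decreasing_by
  · have h := tfdRoot_pos (n+1) D (by omega)
    have := tfdRoot_le (n+1) D
    omega
  · have h := tfdRoot_pos (n+1) D (by omega)
    omega

theorem tfd_size : ∀ (n : ℕ) (D : ℕ → ℕ → Prop), (tfd n D).size = n := by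
  intro n
  induction n using Nat.strong_induction_on with
  | _ n ih =>
    intro D
    match n with
    | 0 => simp [tfd, BinTree.size]
    | (m+1) =>
      rw [tfd]
      have h1 := tfdRoot_pos (m+1) D (by omega)
      have h2 := tfdRoot_le (m+1) D
      show (tfd (tfdRoot (m+1) D - 1) D).size + (tfd (m + 1 - tfdRoot (m+1) D) _).size + 1 = m + 1
      rw [ih _ (by omega), ih _ (by omega)]
      omega

theorem tfd_congr : ∀ (n : ℕ) (D D' : ℕ → ℕ → Prop),
    (∀ c a, c ≤ n → 0 < a → (D c a ↔ D' c a)) → tfd n D = tfd n D' := by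
  intro n
  induction n using Nat.strong_induction_on with
  | _ n ih =>
    intro D D' h
    match n with
    | 0 => rw [tfd, tfd]
    | (m+1) =>
      have hset : {a | 0 < a ∧ a ≤ m+1 ∧ D (m+1) a} = {a | 0 < a ∧ a ≤ m+1 ∧ D' (m+1) a} := by
        ext a
        simp only [Set.mem_setOf_eq]
        constructor
        · rintro ⟨h1, h2, h3⟩; exact ⟨h1, h2, (h _ _ le_rfl h1).1 h3⟩
        · rintro ⟨h1, h2, h3⟩; exact ⟨h1, h2, (h _ _ le_rfl h1).2 h3⟩
      have hroot : tfdRoot (m+1) D = tfdRoot (m+1) D' := by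
        unfold tfdRoot; rw [hset]
      have h1 := tfdRoot_pos (m+1) D (by omega)
      have h2 := tfdRoot_le (m+1) D
      rw [tfd, tfd, ← hroot]
      congr 1
      · exact ih _ (by omega) D D' (fun c a hc ha => h c a (by omega) ha)
      · exact ih _ (by omega) _ _ (fun c a hc ha => h _ _ (by omega) (by omega))
namespace IntervalPoset

def restrict (P : IntervalPoset) (m : ℕ) (hm : m ≤ P.n) : IntervalPoset where
  n := m
  rel x y := P.rel x y ∧ x ≤ m ∧ y ≤ m
  supp a b h := ⟨(P.supp a b h.1).1, h.2.1, (P.supp a b h.1).2.2.1, h.2.2⟩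
  refl a h1 h2 := ⟨P.refl a h1 (le_trans h2 hm), h2, h2⟩
  antisymm a b h1 h2 := P.antisymm a b h1.1 h2.1
  trans a b c h1 h2 := ⟨P.trans a b c h1.1 h2.1, h1.2.1, h2.2.2⟩
  incCond a b c h1 h2 h3 := ⟨P.incCond a b c h1.1 h2 h3, by omega, h1.2.2⟩
  decCond a b c h1 h2 h3 := ⟨P.decCond a b c h1.1 h2 h3, by omega, h1.2.2⟩

def shift (P : IntervalPoset) (s : ℕ) : IntervalPoset where
  n := P.n - s
  rel x y := P.rel (x+s) (y+s) ∧ 1 ≤ x ∧ x ≤ P.n - s ∧ 1 ≤ y ∧ y ≤ P.n - s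
  supp a b h := ⟨h.2.1, h.2.2.1, h.2.2.2.1, h.2.2.2.2⟩
  refl a h1 h2 := ⟨P.refl (a+s) (by omega) (by omega), h1, h2, h1, h2⟩
  antisymm a b h1 h2 := by have := P.antisymm _ _ h1.1 h2.1; omega
  trans a b c h1 h2 := ⟨P.trans _ _ _ h1.1 h2.1, h1.2.1, h1.2.2.1, h2.2.2.2⟩
  incCond a b c h1 h2 h3 :=
    ⟨P.incCond (a+s) (b+s) (c+s) h1.1 (by omega) (by omega), by omega, by omega,
      h1.2.2.2⟩
  decCond a b c h1 h2 h3 :=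
    ⟨P.decCond (a+s) (b+s) (c+s) h1.1 (by omega) (by omega), by omega, by omega,
      h1.2.2.2⟩

def reflect (P : IntervalPoset) : IntervalPoset where
  n := P.n
  rel x y := P.rel (P.n+1-x) (P.n+1-y) ∧ 1 ≤ x ∧ x ≤ P.n ∧ 1 ≤ y ∧ y ≤ P.n
  supp a b h := ⟨h.2.1, h.2.2.1, h.2.2.2.1, h.2.2.2.2⟩
  refl a h1 h2 := ⟨P.refl (P.n+1-a) (by omega) (by omega), h1, h2, h1, h2⟩
  antisymm a b h1 h2 := by have := P.antisymm _ _ h1.1 h2.1; omega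
  trans a b c h1 h2 := ⟨P.trans _ _ _ h1.1 h2.1, h1.2.1, h1.2.2.1, h2.2.2.2⟩
  incCond a b c h1 h2 h3 :=
    ⟨P.decCond (P.n+1-c) (P.n+1-b) (P.n+1-a) h1.1 (by omega) (by omega),
      by omega, by omega, h1.2.2.2⟩
  decCond a b c h1 h2 h3 :=
    ⟨P.incCond (P.n+1-c) (P.n+1-b) (P.n+1-a) h1.1 (by omega) (by omega),
      by omega, by omega, h1.2.2.2⟩

end IntervalPoset
open BinTree in
theorem tfd_main : ∀ (n : ℕ) (P : IntervalPoset), P.n = n →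
    (∀ a c, a < c → (sub (tfd n (fun x y => P.rel x y ∧ y < x)) 0 c a ↔ P.rel c a))
    ∧ (∀ a c, a < c → P.rel a c → sub (tfd n (fun x y => P.rel x y ∧ y < x)) 0 a c) := by
  intro n
  induction n using Nat.strong_induction_on with
  | _ n ih =>
    intro P hP
    match n, hP with
    | 0, hP =>
      constructor
      · intro a c hac
        rw [tfd]
        simp only [BinTree.sub]
        constructor
        · intro h; exact h.elim
        · intro h; have := P.supp c a h; omega
      · intro a c hac h
        have := P.supp a c h; omega
    | (m+1), hP =>
      set D := (fun x y => P.rel x y ∧ y < x) with hD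
      set r := tfdRoot (m+1) D with hrdef
      have hr1 : 0 < r := tfdRoot_pos _ _ (by omega)
      have hr2 : r ≤ m + 1 := tfdRoot_le _ _
      -- structural facts
      have F1 : ∀ c, r < c → c ≤ m+1 → P.rel c r := by
        intro c hc1 hc2
        by_cases hS : {a | 0 < a ∧ a ≤ m+1 ∧ D (m+1) a}.Nonempty
        · have hm := tfdRoot_mem (m+1) D hS
          rcases eq_or_lt_of_le hc2 with he | hlt
          · exact he ▸ hm.2.2.1
          · exact P.decCond r c (m+1) hm.2.2.1 hc1 hlt
        · have := tfdRoot_empty (m+1) D hS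
          omega
      have F2 : ∀ a c, r ≤ c → c ≤ m+1 → P.rel c a → a < c → r ≤ a := by
        intro a c hc1 hc2 hrel hac
        by_contra har
        push_neg at har
        have hsupp := P.supp c a hrel
        have hra : P.rel r a := by
          rcases eq_or_lt_of_le hc1 with he | hlt
          · exact he ▸ hrel
          · exact P.decCond a r c hrel har hlt
        by_cases hS : {a | 0 < a ∧ a ≤ m+1 ∧ D (m+1) a}.Nonempty
        · have hm := tfdRoot_mem (m+1) D hS
          have hna : P.rel (m+1) a := P.trans _ _ _ hm.2.2.1 hra
          have : r ≤ a := tfdRoot_min (m+1) D a ⟨by omega, by omega, hna, by omega⟩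
          omega
        · have hre := tfdRoot_empty (m+1) D hS
          have hrm : r = m + 1 := by rw [hrdef]; exact hre
          have : r ≤ a := tfdRoot_min (m+1) D a
            ⟨by omega, by omega, hrm ▸ hra, by omega⟩
          exact absurd this (by omega)
      have F3 : ∀ a c, a ≤ r → r < c → P.rel a c → False := by
        intro a c ha1 hc1 hrel
        have hsupp := P.supp a c hrel
        have hrc : P.rel r c := by
          rcases eq_or_lt_of_le ha1 with he | hlt
          · exact he ▸ hrel
          · exact P.incCond a r c hrel hlt hc1
        by_cases hS : {a | 0 < a ∧ a ≤ m+1 ∧ D (m+1) a}.Nonempty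
        · have hm := tfdRoot_mem (m+1) D hS
          rcases eq_or_lt_of_le (show c ≤ m+1 by omega) with he | hlt
          · have := P.antisymm r (m+1) (he ▸ hrc) hm.2.2.1
            omega
          · have := P.antisymm c r (P.decCond r c (m+1) hm.2.2.1 hc1 hlt) hrc
            omega
        · have := tfdRoot_empty (m+1) D hS
          omega
      -- the two subtrees
      have hres : r - 1 ≤ P.n := by omega
      set L := tfd (r - 1) D with hLdef
      set R := tfd (m + 1 - r) (fun c a => D (c + r) (a + r)) with hRdef
      have heq : tfd (m+1) D = BinTree.node L R := by rw [tfd]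
      have hLsize : L.size = r - 1 := tfd_size _ _
      have hRsize : R.size = m + 1 - r := tfd_size _ _
      have IH1 := ih (r-1) (by omega) (P.restrict (r-1) hres) rfl
      have IH2 := ih (m+1-r) (by omega) (P.shift r) (by
        show P.n - r = m + 1 - r; rw [hP])
      have congr1 : L = tfd (r-1) (fun x y => (P.restrict (r-1) hres).rel x y ∧ y < x) := by
        rw [hLdef]
        apply tfd_congr
        intro c a hc ha
        simp only [hD, IntervalPoset.restrict]
        constructor
        · rintro ⟨h1, h2⟩; exact ⟨⟨h1, by omega, by omega⟩, h2⟩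
        · rintro ⟨⟨h1, _, _⟩, h2⟩; exact ⟨h1, h2⟩
      have congr2 : R = tfd (m+1-r) (fun x y => (P.shift r).rel x y ∧ y < x) := by
        rw [hRdef]
        apply tfd_congr
        intro c a hc ha
        simp only [hD, IntervalPoset.shift]
        constructor
        · rintro ⟨h1, h2⟩
          refine ⟨⟨h1, by omega, by rw [hP]; omega, by omega, by rw [hP]; omega⟩, by omega⟩
        · rintro ⟨⟨h1, _, _, _, _⟩, h2⟩; exact ⟨h1, by omega⟩
      have hshift : ∀ x y, r < x → r < y → (sub R r x y ↔ sub R 0 (x-r) (y-r)) := by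
        intro x y hx hy
        constructor
        · intro h
          apply (BinTree.sub_shift R 0 r (x-r) (y-r)).2
          rw [show (0:ℕ)+r = r by omega, show (x-r)+r = x by omega,
            show (y-r)+r = y by omega]
          exact h
        · intro h
          have := (BinTree.sub_shift R 0 r (x-r) (y-r)).1 h
          rwa [show (0:ℕ)+r = r by omega, show (x-r)+r = x by omega,
            show (y-r)+r = y by omega] at this
      rw [heq]
      constructor
      · intro a c hac
        constructor
        · rintro (⟨he, hc1, hc2⟩ | h | h)
          · have ha : a = r := by omega
            exact ha ▸ F1 c (by omega) (by omega)
          · rw [congr1] at h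
            exact (((IH1.1 a c hac).1 h)).1
          · have hb := BinTree.sub_bounds _ _ _ _ h
            have h' : sub R r c a := BinTree.sub_off h (by omega)
            have h'' := (hshift c a (by omega) (by omega)).1 h'
            rw [congr2] at h''
            have := ((IH2.1 (a-r) (c-r) (by omega)).1 h'').1
            rwa [show c-r+r = c by omega, show a-r+r = a by omega] at this
        · intro hrel
          have hsupp := P.supp c a hrel
          rcases lt_trichotomy a r with har | har | har
          · have hcr : c < r := by
              by_contra hcr
              push_neg at hcr
              have := F2 a c hcr (by omega) hrel hac
              omega
            refine Or.inr (Or.inl ?_)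
            rw [congr1]
            exact (IH1.1 a c hac).2 ⟨hrel, by omega, by omega⟩
          · exact Or.inl ⟨by omega, by omega, by omega⟩
          · refine Or.inr (Or.inr ?_)
            have hsub0 : sub R 0 (c-r) (a-r) := by
              rw [congr2]
              apply (IH2.1 (a-r) (c-r) (by omega)).2
              refine ⟨by rw [show c-r+r = c by omega, show a-r+r = a by omega]; exact hrel,
                by omega, by rw [hP]; omega, by omega, by rw [hP]; omega⟩
            have := (hshift c a (by omega) (by omega)).2 hsub0
            exact BinTree.sub_off this (by omega)
      · intro a c hac hrel
        have hsupp := P.supp a c hrel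
        rcases lt_trichotomy c r with hcr | hcr | hcr
        · refine Or.inr (Or.inl ?_)
          rw [congr1]
          exact IH1.2 a c hac ⟨hrel, by omega, by omega⟩
        · exact Or.inl ⟨by omega, by omega, by omega⟩
        · have har : r < a := by
            rcases le_or_gt a r with h | h
            · exact absurd (F3 a c h hcr hrel) (fun x => x)
            · exact h
          refine Or.inr (Or.inr ?_)
          have hsub0 : sub R 0 (a-r) (c-r) := by
            rw [congr2]
            apply IH2.2 (a-r) (c-r) (by omega)
            refine ⟨by rw [show c-r+r = c by omega, show a-r+r = a by omega]; exact hrel,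
              by omega, by rw [hP]; omega, by omega, by rw [hP]; omega⟩
          have := (hshift a c (by omega) (by omega)).2 hsub0
          exact BinTree.sub_off this (by omega)
open BinTree

theorem transGen_both {T1 T2 : BinTree} (h : tamariLE T1 T2) :
    ∀ x y, Relation.TransGen (fun x y => decRel T1 x y ∨ incRel T2 x y) x y →
      sub T1 0 x y ∧ sub T2 0 x y := by
  have step : ∀ u v, (decRel T1 u v ∨ incRel T2 u v) → sub T1 0 u v ∧ sub T2 0 u v := by
    rintro u v (⟨hlt, hsub⟩ | ⟨hlt, hsub⟩)
    · exact ⟨hsub, tamari_dec_mono h 0 u v hlt hsub⟩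
    · exact ⟨tamari_inc_mono h 0 u v hlt hsub, hsub⟩
  intro x y hxy
  induction hxy with
  | single hs => exact step _ _ hs
  | tail h1 hs ih =>
    have h2 := step _ _ hs
    exact ⟨sub_trans _ _ _ _ _ ih.1 h2.1, sub_trans _ _ _ _ _ ih.2 h2.2⟩

theorem pairRel_iff {T1 T2 : BinTree} {n : ℕ} (h1 : T1.size = n) (h2 : T2.size = n)
    (h : tamariLE T1 T2) (x y : ℕ) :
    pairRel n T1 T2 x y ↔
      (x = y ∧ 1 ≤ x ∧ x ≤ n) ∨ (x < y ∧ sub T2 0 x y) ∨ (y < x ∧ sub T1 0 x y) := by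
  constructor
  · rintro (⟨he, hb⟩ | hT)
    · exact Or.inl ⟨he, hb⟩
    · have hboth := transGen_both h x y hT
      rcases lt_trichotomy x y with hxy | hxy | hxy
      · exact Or.inr (Or.inl ⟨hxy, hboth.2⟩)
      · have hb := sub_bounds _ _ _ _ hboth.1
        exact Or.inl ⟨hxy, by omega, by omega⟩
      · exact Or.inr (Or.inr ⟨hxy, hboth.1⟩)
  · rintro (⟨he, hb⟩ | ⟨hlt, hsub⟩ | ⟨hlt, hsub⟩)
    · exact Or.inl ⟨he, hb⟩
    · exact Or.inr (Relation.TransGen.single (Or.inr ⟨hlt, hsub⟩))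
    · exact Or.inr (Relation.TransGen.single (Or.inl ⟨hlt, hsub⟩))

theorem pairRel_both {T1 T2 : BinTree} {n : ℕ} (h1 : T1.size = n) (h2 : T2.size = n)
    (h : tamariLE T1 T2) (x y : ℕ) (hxy : pairRel n T1 T2 x y) (hne : x ≠ y) :
    sub T1 0 x y ∧ sub T2 0 x y := by
  rcases hxy with ⟨he, _⟩ | hT
  · exact absurd he hne
  · exact transGen_both h x y hT

/-- Part 1: the relation of a Tamari interval is an interval-poset. -/
theorem part1 (n : ℕ) (T1 T2 : BinTree) (h1 : T1.size = n) (h2 : T2.size = n)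
    (h : tamariLE T1 T2) :
    ∃ P : IntervalPoset, P.n = n ∧ P.rel = pairRel n T1 T2 := by
  refine ⟨⟨n, pairRel n T1 T2, ?_, ?_, ?_, ?_, ?_, ?_⟩, rfl, rfl⟩
  · intro a b hab
    rcases (pairRel_iff h1 h2 h a b).1 hab with ⟨he, hb⟩ | ⟨hlt, hsub⟩ | ⟨hlt, hsub⟩
    · omega
    · have := sub_bounds _ _ _ _ hsub; omega
    · have := sub_bounds _ _ _ _ hsub; omega
  · intro a ha1 ha2
    exact Or.inl ⟨rfl, ha1, ha2⟩
  · intro a b hab hba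
    by_contra hne
    have hb1 := pairRel_both h1 h2 h a b hab hne
    have hb2 := pairRel_both h1 h2 h b a hba (Ne.symm hne)
    exact hne (sub_antisymm T1 0 a b hb1.1 hb2.1)
  · intro a b c hab hbc
    rcases hab with ⟨he, hb⟩ | hT
    · exact he ▸ hbc
    · rcases hbc with ⟨he', hb'⟩ | hT'
      · exact he' ▸ Or.inr hT
      · exact Or.inr (hT.trans hT')
  · intro a b c hac hab hbc
    have hsub := (pairRel_both h1 h2 h a c hac (by omega)).2
    have : sub T2 0 b c := sub_interval T2 0 a c b hsub (Or.inl ⟨by omega, by omega⟩)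
    exact Or.inr (Relation.TransGen.single (Or.inr ⟨hbc, this⟩))
  · intro a b c hca hab hbc
    have hsub := (pairRel_both h1 h2 h c a hca (by omega)).1
    have : sub T1 0 b a := sub_interval T1 0 c a b hsub (Or.inr ⟨by omega, by omega⟩)
    exact Or.inr (Relation.TransGen.single (Or.inl ⟨hab, this⟩))

theorem inc_inj (S T : BinTree) (n : ℕ) (hS : S.size = n) (hT : T.size = n)
    (h : ∀ a c, 0 < a → a < c → c ≤ n → (sub S 0 a c ↔ sub T 0 a c)) : S = T := by
  have hm := dec_inj S.mirror T.mirror 0 (by simp [hS, hT]) ?_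
  · have := congrArg BinTree.mirror hm
    simpa using this
  · intro a c h1 h2 h3
    rw [sub_mirror_iff, sub_mirror_iff, hS, hT]
    rw [size_mirror, hS] at h3
    exact h (2*0+n+1-c) (2*0+n+1-a) (by omega) (by omega) (by omega)

/-- Part 2: injectivity. -/
theorem part2 (n : ℕ) (T1 T2 U1 U2 : BinTree) (h1 : T1.size = n) (h2 : T2.size = n)
    (h : tamariLE T1 T2) (g1 : U1.size = n) (g2 : U2.size = n) (g : tamariLE U1 U2)
    (he : pairRel n T1 T2 = pairRel n U1 U2) : T1 = U1 ∧ T2 = U2 := by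
  constructor
  · apply dec_inj T1 U1 0 (h1.trans g1.symm)
    intro a c ha hac hc
    rw [h1] at hc
    constructor
    · intro hsub
      have : pairRel n T1 T2 c a := Or.inr (Relation.TransGen.single (Or.inl ⟨hac, hsub⟩))
      rw [he] at this
      exact (pairRel_both g1 g2 g c a this (by omega)).1
    · intro hsub
      have : pairRel n U1 U2 c a := Or.inr (Relation.TransGen.single (Or.inl ⟨hac, hsub⟩))
      rw [← he] at this
      exact (pairRel_both h1 h2 h c a this (by omega)).1
  · apply inc_inj T2 U2 n h2 g2
    intro a c ha hac hc
    constructor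
    · intro hsub
      have : pairRel n T1 T2 a c := Or.inr (Relation.TransGen.single (Or.inr ⟨hac, hsub⟩))
      rw [he] at this
      exact (pairRel_both g1 g2 g a c this (by omega)).2
    · intro hsub
      have : pairRel n U1 U2 a c := Or.inr (Relation.TransGen.single (Or.inr ⟨hac, hsub⟩))
      rw [← he] at this
      exact (pairRel_both h1 h2 h a c this (by omega)).2
open BinTree

theorem tfd_reflect (n : ℕ) (P : IntervalPoset) (hP : P.n = n) :
    (∀ a c, a < c →
      (sub (tfd n (fun x y => (P.reflect).rel x y ∧ y < x)).mirror 0 a c ↔ P.rel a c))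
    ∧ (∀ a c, a < c → P.rel c a →
      sub (tfd n (fun x y => (P.reflect).rel x y ∧ y < x)).mirror 0 c a) := by
  have hQ : (P.reflect).n = n := hP
  have M := tfd_main n P.reflect hQ
  set T' := tfd n (fun x y => (P.reflect).rel x y ∧ y < x) with hT'
  have hsz : T'.size = n := tfd_size _ _
  constructor
  · intro a c hac
    constructor
    · intro h
      rw [sub_mirror_iff, hsz] at h
      have hb := sub_bounds _ _ _ _ h
      rw [hsz] at hb
      have h' := (M.1 (2*0+n+1-c) (2*0+n+1-a) (by omega)).1 h
      have h1 := h'.1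
      rw [hP] at h1
      rwa [show n+1-(2*0+n+1-a) = a by omega, show n+1-(2*0+n+1-c) = c by omega] at h1
    · intro hrel
      have hsupp := P.supp a c hrel
      rw [hP] at hsupp
      rw [sub_mirror_iff, hsz]
      apply (M.1 (2*0+n+1-c) (2*0+n+1-a) (by omega)).2
      refine ⟨?_, by omega, by rw [hP]; omega, by omega, by rw [hP]; omega⟩
      show P.rel (P.n+1-(2*0+n+1-a)) (P.n+1-(2*0+n+1-c))
      rw [hP, show n+1-(2*0+n+1-a) = a by omega, show n+1-(2*0+n+1-c) = c by omega]
      exact hrel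
  · intro a c hac hrel
    have hsupp := P.supp c a hrel
    rw [hP] at hsupp
    rw [sub_mirror_iff, hsz]
    apply M.2 (2*0+n+1-c) (2*0+n+1-a) (by omega)
    refine ⟨?_, by omega, by rw [hP]; omega, by omega, by rw [hP]; omega⟩
    show P.rel (P.n+1-(2*0+n+1-c)) (P.n+1-(2*0+n+1-a))
    rw [hP, show n+1-(2*0+n+1-a) = a by omega, show n+1-(2*0+n+1-c) = c by omega]
    exact hrel

/-- Part 3: surjectivity. -/
theorem part3 (n : ℕ) (P : IntervalPoset) (hP : P.n = n) :
    ∃ T1 T2 : BinTree, T1.size = n ∧ T2.size = n ∧ tamariLE T1 T2 ∧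
      P.rel = pairRel n T1 T2 := by
  set T1 := tfd n (fun x y => P.rel x y ∧ y < x) with hT1
  set T2 := (tfd n (fun x y => (P.reflect).rel x y ∧ y < x)).mirror with hT2
  have M1 := tfd_main n P hP
  have M2 := tfd_reflect n P hP
  have hs1 : T1.size = n := tfd_size _ _
  have hs2 : T2.size = n := by rw [hT2, size_mirror]; exact tfd_size _ _
  have htam : tamariLE T1 T2 := by
    apply L6 T1 T2 n hs1 hs2
    intro a c hac hsub
    exact M2.2 a c hac ((M1.1 a c hac).1 hsub)
  refine ⟨T1, T2, hs1, hs2, htam, ?_⟩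
  funext x y
  apply propext
  constructor
  · intro hrel
    have hsupp := P.supp x y hrel
    rcases lt_trichotomy x y with hxy | hxy | hxy
    · exact Or.inr (Relation.TransGen.single (Or.inr ⟨hxy, (M2.1 x y hxy).2 hrel⟩))
    · exact Or.inl ⟨hxy, by omega, by omega⟩
    · exact Or.inr (Relation.TransGen.single (Or.inl ⟨hxy, (M1.1 y x hxy).2 hrel⟩))
  · rintro (⟨he, hb⟩ | hT)
    · exact he ▸ P.refl x hb.1 (by omega)
    · have step : ∀ u v, (decRel T1 u v ∨ incRel T2 u v) → P.rel u v := by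
        rintro u v (⟨hlt, hsub⟩ | ⟨hlt, hsub⟩)
        · exact (M1.1 v u hlt).1 hsub
        · exact (M2.1 u v hlt).1 hsub
      induction hT with
      | single hs => exact step _ _ hs
      | tail h1 hs ih => exact P.trans _ _ _ ih (step _ _ hs)
open BinTree

def fromRev : List ℕ → BinTree
  | [] => BinTree.leaf
  | ρ :: rest => BinTree.node (fromRev (rest.filter (fun x => x < ρ)))
      (fromRev (rest.filter (fun x => ρ < x)))
termination_by l => l.length
decreasing_by
  · simp only [List.length_unattach]; exact Nat.lt_succ_of_le ((List.length_filter_le _ _).trans (by simp))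
  · simp only [List.length_unattach]; exact Nat.lt_succ_of_le ((List.length_filter_le _ _).trans (by simp))

theorem filter_partition (ρ : ℕ) (rest : List ℕ) (hρ : ρ ∉ rest) :
    rest.length = (rest.filter (fun x => x < ρ)).length
      + (rest.filter (fun x => ρ < x)).length := by
  have h1 := List.length_eq_length_filter_add (l := rest) (fun x => decide (x < ρ))
  have h2 : rest.filter (fun x => !(decide (x < ρ))) = rest.filter (fun x => ρ < x) := by
    apply List.filter_congr
    intro x hx
    have hne : x ≠ ρ := fun he => hρ (he ▸ hx)
    by_cases h : x < ρ
    · simp [h]; omega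
    · simp [h]; omega
  rw [h2] at h1
  exact h1

theorem fromRev_size : ∀ (n : ℕ) (l : List ℕ), l.length = n → l.Nodup →
    (fromRev l).size = n := by
  intro n
  induction n using Nat.strong_induction_on with
  | _ n ih =>
    intro l hlen hnd
    match l, hlen with
    | [], hlen => rw [fromRev, ← hlen]; rfl
    | (ρ :: rest), hlen =>
      rw [fromRev]
      have hρ : ρ ∉ rest := (List.nodup_cons.1 hnd).1
      have hndr : rest.Nodup := (List.nodup_cons.1 hnd).2
      have hpart := filter_partition ρ rest hρ
      have hlf := List.length_filter_le (fun x => decide (x < ρ)) rest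
      have hrf := List.length_filter_le (fun x => decide (ρ < x)) rest
      show (fromRev _).size + (fromRev _).size + 1 = n
      rw [ih (rest.filter (fun x => x < ρ)).length (by simp at hlen ⊢; omega) _ rfl
        (hndr.filter _),
        ih (rest.filter (fun x => ρ < x)).length (by simp at hlen ⊢; omega) _ rfl
        (hndr.filter _)]
      simp at hlen
      omega

theorem indexOf_filter_le_iff : ∀ (t : List ℕ) (p : ℕ → Bool), t.Nodup → ∀ (v w : ℕ),
    v ∈ t.filter p → w ∈ t.filter p →
    ((t.filter p).idxOf w ≤ (t.filter p).idxOf v ↔ t.idxOf w ≤ t.idxOf v) := by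
  intro t
  induction t with
  | nil => intro p _ v w hv _; simp at hv
  | cons a t' ihp =>
    intro p hnd v w hv hw
    have hndr : t'.Nodup := (List.nodup_cons.1 hnd).2
    rw [List.filter_cons] at hv hw
    by_cases hpa : p a
    · simp only [hpa, if_pos] at hv hw
      rw [List.filter_cons, if_pos hpa]
      by_cases hwa : w = a
      · subst hwa
        simp [List.idxOf_cons_self]
      · have hw' : w ∈ t'.filter p := by
          rcases List.mem_cons.1 hw with h | h
          · exact absurd h hwa
          · exact h
        by_cases hva : v = a
        · subst hva
          rw [List.idxOf_cons_self, List.idxOf_cons_self,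
            List.idxOf_cons_ne _ (fun h => hwa h.symm),
            List.idxOf_cons_ne _ (fun h => hwa h.symm)]
          omega
        · have hv' : v ∈ t'.filter p := by
            rcases List.mem_cons.1 hv with h | h
            · exact absurd h hva
            · exact h
          rw [List.idxOf_cons_ne _ (fun h => hwa h.symm),
            List.idxOf_cons_ne _ (fun h => hva h.symm),
            List.idxOf_cons_ne _ (fun h => hwa h.symm),
            List.idxOf_cons_ne _ (fun h => hva h.symm)]
          have := ihp p hndr v w hv' hw'
          omega
    · simp only [hpa, if_neg, Bool.false_eq_true, not_false_eq_true] at hv hw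
      rw [List.filter_cons, if_neg (by simp [hpa])]
      have hva : v ≠ a := fun he => hpa (by rw [← he]; exact List.of_mem_filter hv)
      have hwa : w ≠ a := fun he => hpa (by rw [← he]; exact List.of_mem_filter hw)
      rw [List.idxOf_cons_ne _ (fun h => hwa h.symm),
        List.idxOf_cons_ne _ (fun h => hva h.symm)]
      have := ihp p hndr v w hv hw
      omega

theorem indexOf_reverse : ∀ (l : List ℕ), l.Nodup → ∀ x, x ∈ l →
    l.reverse.idxOf x = l.length - 1 - l.idxOf x := by
  intro l
  induction l with
  | nil => intro _ x hx; simp at hx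
  | cons a t ih =>
    intro hnd x hx
    have hat : a ∉ t := (List.nodup_cons.1 hnd).1
    have hndt : t.Nodup := (List.nodup_cons.1 hnd).2
    rw [List.reverse_cons]
    by_cases hxa : x = a
    · subst hxa
      rw [List.idxOf_append_of_notMem (fun h => hat (by simpa using h)),
        List.idxOf_cons_self, List.idxOf_cons_self]
      simp
    · have hxt : x ∈ t := by
        rcases List.mem_cons.1 hx with h | h
        · exact absurd h hxa
        · exact h
      rw [List.idxOf_append_of_mem (by simpa using hxt),
        List.idxOf_cons_ne _ (fun h => hxa h.symm), ih hndt x hxt]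
      have hlt := List.idxOf_lt_length_iff.2 hxt
      simp only [List.length_reverse, List.length_cons]
      omega
open BinTree

theorem fromRev_sub : ∀ (n : ℕ) (l : List ℕ) (o : ℕ), l.length = n → l.Nodup →
    (∀ x, x ∈ l ↔ o < x ∧ x ≤ o + n) →
    ∀ z w, z ∈ l → w ∈ l →
      (sub (fromRev l) o z w ↔
        ∀ v ∈ l, ((z ≤ v ∧ v ≤ w) ∨ (w ≤ v ∧ v ≤ z)) → l.idxOf w ≤ l.idxOf v) := by
  intro n
  induction n using Nat.strong_induction_on with
  | _ n ih =>
    intro l o hlen hnd hmem z w hz hw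
    match l, hlen, hnd, hmem, hz, hw with
    | [], hlen, hnd, hmem, hz, hw => simp at hz
    | (ρ :: rest), hlen, hnd, hmem, hz, hw =>
      have hρnr : ρ ∉ rest := (List.nodup_cons.1 hnd).1
      have hndr : rest.Nodup := (List.nodup_cons.1 hnd).2
      have hρb := (hmem ρ).1 (List.mem_cons_self)
      set L := rest.filter (fun x => x < ρ) with hLdef
      set R := rest.filter (fun x => ρ < x) with hRdef
      have hLnd : L.Nodup := hndr.filter _
      have hRnd : R.Nodup := hndr.filter _
      have hpart : rest.length = L.length + R.length := filter_partition ρ rest hρnr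
      have hlen' : rest.length + 1 = n := by simpa using hlen
      have hLm0 : ∀ x, x ∈ L ↔ (o < x ∧ x < ρ) := by
        intro x
        constructor
        · intro hx
          have h1 := List.mem_of_mem_filter hx
          have h2 := List.of_mem_filter hx
          simp only [decide_eq_true_eq] at h2
          have := (hmem x).1 (List.mem_cons_of_mem _ h1)
          exact ⟨this.1, h2⟩
        · rintro ⟨h1, h2⟩
          have hxl : x ∈ ρ :: rest := (hmem x).2 ⟨h1, by omega⟩
          have hxr : x ∈ rest := by
            rcases List.mem_cons.1 hxl with h | h
            · omega
            · exact h
          exact List.mem_filter.2 ⟨hxr, by simpa using h2⟩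
      have hRm0 : ∀ x, x ∈ R ↔ (ρ < x ∧ x ≤ o + n) := by
        intro x
        constructor
        · intro hx
          have h1 := List.mem_of_mem_filter hx
          have h2 := List.of_mem_filter hx
          simp only [decide_eq_true_eq] at h2
          have := (hmem x).1 (List.mem_cons_of_mem _ h1)
          exact ⟨h2, this.2⟩
        · rintro ⟨h1, h2⟩
          have hxl : x ∈ ρ :: rest := (hmem x).2 ⟨by omega, h2⟩
          have hxr : x ∈ rest := by
            rcases List.mem_cons.1 hxl with h | h
            · omega
            · exact h
          exact List.mem_filter.2 ⟨hxr, by simpa using h1⟩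
      have hLlen : L.length = ρ - o - 1 := by
        have hfe : L.toFinset = Finset.Ioo o ρ := by
          ext x
          rw [List.mem_toFinset, Finset.mem_Ioo, hLm0]
        have := List.toFinset_card_of_nodup hLnd
        rw [hfe] at this
        rw [← this, Nat.card_Ioo]
      have hRlen : R.length = o + n - ρ := by
        have hfe : R.toFinset = Finset.Ioc ρ (o + n) := by
          ext x
          rw [List.mem_toFinset, Finset.mem_Ioc, hRm0]
        have := List.toFinset_card_of_nodup hRnd
        rw [hfe] at this
        rw [← this, Nat.card_Ioc]
      have hLsz : (fromRev L).size = L.length := fromRev_size _ _ rfl hLnd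
      have hRsz : (fromRev R).size = R.length := fromRev_size _ _ rfl hRnd
      have hroot : o + (fromRev L).size + 1 = ρ := by omega
      have hidx : ∀ x ∈ rest, (ρ :: rest).idxOf x = rest.idxOf x + 1 := by
        intro x hx
        exact List.idxOf_cons_ne _ (fun h => hρnr (h ▸ hx))
      have hidxρ : (ρ :: rest).idxOf ρ = 0 := List.idxOf_cons_self
      have CHARL := ih L.length (by omega) L o rfl hLnd
        (fun x => by rw [hLm0 x]; omega)
      have CHARR := ih R.length (by omega) R ρ rfl hRnd
        (fun x => by rw [hRm0 x]; omega)
      have hfr : fromRev (ρ :: rest) = BinTree.node (fromRev L) (fromRev R) := by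
        rw [fromRev]
      rw [hfr]
      by_cases hwρ : w = ρ
      · subst hwρ
        constructor
        · intro _ v hv _
          rw [hidxρ]
          omega
        · intro _
          have hzb := (hmem z).1 hz
          exact Or.inl ⟨by omega, by omega, by omega⟩
      · have hwrest : w ∈ rest := by
          rcases List.mem_cons.1 hw with h | h
          · exact absurd h hwρ
          · exact h
        have hwb := (hmem w).1 hw
        by_cases hzρ : z = ρ
        · subst hzρ
          constructor
          · intro h
            exfalso
            rcases h with ⟨he, _, _⟩ | h | h
            · exact hwρ (by omega)
            · have := sub_bounds _ _ _ _ h; omega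
            · have := sub_bounds _ _ _ _ h; omega
          · intro h
            exfalso
            have := h z (List.mem_cons_self) (by omega)
            rw [hidx w hwrest, hidxρ] at this
            omega
        · have hzrest : z ∈ rest := by
            rcases List.mem_cons.1 hz with h | h
            · exact absurd h hzρ
            · exact h
          have hzb := (hmem z).1 hz
          by_cases hzlt : z < ρ
          · by_cases hwlt : w < ρ
            · -- both in L
              have hzL : z ∈ L := (hLm0 z).2 ⟨by omega, hzlt⟩
              have hwL : w ∈ L := (hLm0 w).2 ⟨by omega, hwlt⟩
              have heq2 : sub (BinTree.node (fromRev L) (fromRev R)) o z w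
                  ↔ sub (fromRev L) o z w := by
                constructor
                · rintro (⟨he, _, _⟩ | h | h)
                  · exact absurd (by omega : w = ρ) hwρ
                  · exact h
                  · have := sub_bounds _ _ _ _ h; omega
                · exact fun h => Or.inr (Or.inl h)
              rw [heq2, CHARL z w hzL hwL]
              constructor
              · intro h v hv hbet
                have hvb := (hmem v).1 hv
                have hvL : v ∈ L := (hLm0 v).2 ⟨by omega, by omega⟩
                have h1 := h v hvL hbet
                have hvrest := List.mem_of_mem_filter hvL
                have e1 := indexOf_filter_le_iff rest _ hndr v w hvL hwL
                rw [hidx v hvrest, hidx w hwrest]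
                have h2 := e1.1 h1
                omega
              · intro h v hvL hbet
                have hvrest := List.mem_of_mem_filter hvL
                have h1 := h v (List.mem_cons_of_mem _ hvrest) hbet
                have e1 := indexOf_filter_le_iff rest _ hndr v w hvL hwL
                rw [hidx v hvrest, hidx w hwrest] at h1
                exact e1.2 (by omega)
            · -- z < ρ < w : both sides false
              constructor
              · rintro (⟨he, _, _⟩ | h | h)
                · exact absurd (by omega : w = ρ) hwρ
                · have := sub_bounds _ _ _ _ h; omega
                · have := sub_bounds _ _ _ _ h; omega
              · intro h
                exfalso
                have := h ρ (List.mem_cons_self) (by omega)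
                rw [hidx w hwrest, hidxρ] at this
                omega
          · by_cases hwlt : w < ρ
            · -- w < ρ < z : both sides false
              constructor
              · rintro (⟨he, _, _⟩ | h | h)
                · exact absurd (by omega : w = ρ) hwρ
                · have := sub_bounds _ _ _ _ h; omega
                · have := sub_bounds _ _ _ _ h; omega
              · intro h
                exfalso
                have := h ρ (List.mem_cons_self) (by omega)
                rw [hidx w hwrest, hidxρ] at this
                omega
            · -- both in R
              have hzR : z ∈ R := (hRm0 z).2 ⟨by omega, by omega⟩
              have hwR : w ∈ R := (hRm0 w).2 ⟨by omega, by omega⟩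
              have heq2 : sub (BinTree.node (fromRev L) (fromRev R)) o z w
                  ↔ sub (fromRev R) ρ z w := by
                constructor
                · rintro (⟨he, _, _⟩ | h | h)
                  · exact absurd (by omega : w = ρ) hwρ
                  · have := sub_bounds _ _ _ _ h; omega
                  · exact BinTree.sub_off h (by omega)
                · intro h
                  exact Or.inr (Or.inr (BinTree.sub_off h (by omega)))
              rw [heq2, CHARR z w hzR hwR]
              constructor
              · intro h v hv hbet
                have hvb := (hmem v).1 hv
                have hvR : v ∈ R := (hRm0 v).2 ⟨by omega, by omega⟩
                have h1 := h v hvR hbet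
                have hvrest := List.mem_of_mem_filter hvR
                have e1 := indexOf_filter_le_iff rest _ hndr v w hvR hwR
                rw [hidx v hvrest, hidx w hwrest]
                have h2 := e1.1 h1
                omega
              · intro h v hvR hbet
                have hvrest := List.mem_of_mem_filter hvR
                have h1 := h v (List.mem_cons_of_mem _ hvrest) hbet
                have e1 := indexOf_filter_le_iff rest _ hndr v w hvR hwR
                rw [hidx v hvrest, hidx w hwrest] at h1
                exact e1.2 (by omega)
open BinTree

theorem part4 (n : ℕ) (T1 T2 : BinTree) (h1 : T1.size = n) (h2 : T2.size = n)
    (h : tamariLE T1 T2) (σ : List ℕ) :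
    IsLinExt n (pairRel n T1 T2) σ ↔
      ∃ T' : BinTree, T'.size = n ∧ tamariLE T1 T' ∧ tamariLE T' T2 ∧
        IsLinExt n (fun a b => T'.sub 0 a b) σ := by
  constructor
  · rintro ⟨hnd, hmem, hord⟩
    have hlen : σ.length = n := by
      have hfe : σ.toFinset = Finset.Ioc 0 n := by
        ext x
        rw [List.mem_toFinset, Finset.mem_Ioc, hmem x]
        omega
      have := List.toFinset_card_of_nodup hnd
      rw [hfe, Nat.card_Ioc] at this
      omega
    set l := σ.reverse with hldef
    have hndl : l.Nodup := List.nodup_reverse.2 hnd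
    have hlenl : l.length = n := by rw [hldef, List.length_reverse, hlen]
    have hmeml : ∀ x, x ∈ l ↔ 0 < x ∧ x ≤ 0 + n := by
      intro x
      rw [hldef, List.mem_reverse, hmem x]
      omega
    set T' := fromRev l with hT'def
    have hsz : T'.size = n := fromRev_size n l hlenl hndl
    have CHAR := fromRev_sub n l 0 hlenl hndl hmeml
    have hrev := indexOf_reverse σ hnd
    have hidxlt : ∀ x ∈ σ, σ.idxOf x < σ.length :=
      fun x hx => List.idxOf_lt_length_iff.2 hx
    have horder : ∀ u v, u ∈ σ → v ∈ σ → pairRel n T1 T2 u v → u ≠ v →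
        l.idxOf v < l.idxOf u := by
      intro u v hu hv hpr hne
      have ho := hord u v hpr hne
      have eu := hrev u hu
      have ev := hrev v hv
      have h1' := hidxlt u hu
      have h2' := hidxlt v hv
      rw [hldef]
      omega
    have hmemσl : ∀ x, x ∈ l ↔ x ∈ σ := fun x => by rw [hldef, List.mem_reverse]
    have linext' : IsLinExt n (fun a b => T'.sub 0 a b) σ := by
      refine ⟨hnd, hmem, ?_⟩
      intro a b hsub hne
      have hb := sub_bounds _ _ _ _ hsub
      rw [hsz] at hb
      have haσ : a ∈ σ := (hmem a).2 ⟨by omega, by omega⟩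
      have hbσ : b ∈ σ := (hmem b).2 ⟨by omega, by omega⟩
      have hal : a ∈ l := (hmemσl a).2 haσ
      have hbl : b ∈ l := (hmemσl b).2 hbσ
      have hc := (CHAR a b hal hbl).1 hsub a hal (by omega)
      have hne2 : l.idxOf b ≠ l.idxOf a :=
        fun he => hne ((List.idxOf_inj hbl).1 he).symm
      have ea := hrev a haσ
      have eb := hrev b hbσ
      have h1' := hidxlt a haσ
      have h2' := hidxlt b hbσ
      rw [hldef] at hc hne2
      omega
    have htam1 : tamariLE T1 T' := by
      apply L6 T1 T' n h1 hsz
      intro a c hac hsub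
      have hb := sub_bounds _ _ _ _ hsub
      rw [h1] at hb
      have haσ : a ∈ σ := (hmem a).2 ⟨by omega, by omega⟩
      have hcσ : c ∈ σ := (hmem c).2 ⟨by omega, by omega⟩
      apply (CHAR c a ((hmemσl c).2 hcσ) ((hmemσl a).2 haσ)).2
      intro v hvl hbet
      by_cases hva : v = a
      · subst hva; exact le_refl _
      · have hvσ : v ∈ σ := (hmemσl v).1 hvl
        have hav : a < v := by
          have := (hmeml v).1 hvl
          omega
        have hsubva : sub T1 0 v a :=
          sub_interval T1 0 c a v hsub (Or.inr ⟨by omega, by omega⟩)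
        have hpr : pairRel n T1 T2 v a :=
          Or.inr (Relation.TransGen.single (Or.inl ⟨hav, hsubva⟩))
        exact le_of_lt (horder v a hvσ haσ hpr hva)
    have htam2 : tamariLE T' T2 := by
      apply L6inc T' T2 n hsz h2
      intro a c hac hsub
      have hb := sub_bounds _ _ _ _ hsub
      rw [h2] at hb
      have haσ : a ∈ σ := (hmem a).2 ⟨by omega, by omega⟩
      have hcσ : c ∈ σ := (hmem c).2 ⟨by omega, by omega⟩
      apply (CHAR a c ((hmemσl a).2 haσ) ((hmemσl c).2 hcσ)).2
      intro v hvl hbet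
      by_cases hvc : v = c
      · subst hvc; exact le_refl _
      · have hvσ : v ∈ σ := (hmemσl v).1 hvl
        have hvc' : v < c := by
          have := (hmeml v).1 hvl
          omega
        have hsubvc : sub T2 0 v c :=
          sub_interval T2 0 a c v hsub (Or.inl ⟨by omega, by omega⟩)
        have hpr : pairRel n T1 T2 v c :=
          Or.inr (Relation.TransGen.single (Or.inr ⟨hvc', hsubvc⟩))
        exact le_of_lt (horder v c hvσ hcσ hpr hvc)
    exact ⟨T', hsz, htam1, htam2, linext'⟩
  · rintro ⟨T', hsz, ht1, ht2, hnd, hmem, hord⟩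
    refine ⟨hnd, hmem, ?_⟩
    intro a b hpr hne
    obtain ⟨hs1, hs2⟩ := pairRel_both h1 h2 h a b hpr hne
    rcases lt_trichotomy a b with hlt | heq | hlt
    · exact hord a b (tamari_inc_mono ht2 0 a b hlt hs2) hne
    · exact absurd heq hne
    · exact hord a b (tamari_dec_mono ht1 0 a b hlt hs1) hne
/-- The map `(T1,T2) ↦ P_{[T1,T2]}` is a bijection from Tamari intervals of
size `n` onto interval-posets of size `n`, and the linear extensions of
`P_{[T1,T2]}` are exactly the members of the sylvester classes of the trees
`T'` with `T1 ≤ T' ≤ T2`. -/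
theorem stmt2 (n : ℕ) :
    (∀ T1 T2 : BinTree, T1.size = n → T2.size = n → tamariLE T1 T2 →
      ∃ P : IntervalPoset, P.n = n ∧ P.rel = pairRel n T1 T2) ∧
    (∀ T1 T2 U1 U2 : BinTree, T1.size = n → T2.size = n → tamariLE T1 T2 →
      U1.size = n → U2.size = n → tamariLE U1 U2 →
      pairRel n T1 T2 = pairRel n U1 U2 → T1 = U1 ∧ T2 = U2) ∧
    (∀ P : IntervalPoset, P.n = n →
      ∃ T1 T2 : BinTree, T1.size = n ∧ T2.size = n ∧ tamariLE T1 T2 ∧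
        P.rel = pairRel n T1 T2) ∧
    (∀ T1 T2 : BinTree, T1.size = n → T2.size = n → tamariLE T1 T2 →
      ∀ σ : List ℕ, IsLinExt n (pairRel n T1 T2) σ ↔
        ∃ T' : BinTree, T'.size = n ∧ tamariLE T1 T' ∧ tamariLE T' T2 ∧
          IsLinExt n (fun a b => T'.sub 0 a b) σ) := by
  exact ⟨fun T1 T2 h1 h2 h => part1 n T1 T2 h1 h2 h,
    fun T1 T2 U1 U2 h1 h2 h g1 g2 g he => part2 n T1 T2 U1 U2 h1 h2 h g1 g2 g he,
    fun P hP => part3 n P hP,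
    fun T1 T2 h1 h2 h σ => part4 n T1 T2 h1 h2 h σ⟩
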